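/- Let X be a real-valued random variable with unbounded distribution F and Y a nonnegative random variable with distribution G, neither degenerate at zero. Suppose (X,Y) follows a Sarmanov distribution with kernels φ₁, φ₂ and parameter θ, satisfies Assumption 2 (Ḡ(bx)=o(H̄(x)) for every b>0, where H is the distribution of XY), and there exist constants c>0, d₁∈(0,∞) and a measurable function ψ such that ψ(y)=lim_{δ→0+} (∫_{y−δ}^{y+δ} φ₂(v)G(dv))/(G(y+δ)−G(y−δ)) for all y in the support of Y, φ₁(x)→d₁ as x→∞, and P(1+θd₁ψ(Y)≥c)=1. Then P(XY>x) ~ ∫_0^∞ (1+θd₁ψ(y)) F̄(x/y) G(dy) as x→∞. -/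

import Mathlib

open MeasureTheory ProbabilityTheory Filter Set Asymptotics

noncomputable section

/-- The tail (survival) function `x ↦ P(Z > x)` of a random variable `Z`. -/
def rvTail {Ω : Type*} [MeasureSpace Ω] (Z : Ω → ℝ) (x : ℝ) : ℝ :=
  (ℙ {ω | x < Z ω}).toReal

/-- The cumulative distribution function `x ↦ P(Z ≤ x)` of a random variable `Z`. -/
def rvCdf {Ω : Type*} [MeasureSpace Ω] (Z : Ω → ℝ) (x : ℝ) : ℝ :=
  (ℙ {ω | Z ω ≤ x}).toReal

/-- The left limit of the cdf, `G(y-) = P(Z < y)`. -/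
def rvCdfLeft {Ω : Type*} [MeasureSpace Ω] (Z : Ω → ℝ) (y : ℝ) : ℝ :=
  (ℙ {ω | Z ω < y}).toReal

/-- The distribution of `Z` is unbounded (above): its tail is positive for every `x > 0`. -/
def UnboundedDist {Ω : Type*} [MeasureSpace Ω] (Z : Ω → ℝ) : Prop :=
  ∀ x > 0, 0 < rvTail Z x

/-- The support `D_Z = {y : P(Z ∈ (y - δ, y + δ)) > 0 for all δ > 0}` of the
distribution of `Z`. -/
def distSupport {Ω : Type*} [MeasureSpace Ω] (Z : Ω → ℝ) : Set ℝ :=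
  {y | ∀ δ > 0, 0 < ℙ {ω | Z ω ∈ Ioo (y - δ) (y + δ)}}

/-- The distribution of `Z` belongs to the class `L(γ)`: it is unbounded above and
`P(Z > x - t) ~ e^{γ t} P(Z > x)` as `x → ∞`, for every `t > 0`. -/
def MemLGamma {Ω : Type*} [MeasureSpace Ω] (Z : Ω → ℝ) (γ : ℝ) : Prop :=
  UnboundedDist Z ∧
    ∀ t > 0, (fun x => rvTail Z (x - t)) ~[atTop] (fun x => Real.exp (γ * t) * rvTail Z x)

/-- The tail of the two-fold convolution of the distribution of `Z` with itself. -/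
def convSqTail {Ω : Type*} [MeasureSpace Ω] (Z : Ω → ℝ) (x : ℝ) : ℝ :=
  (((Measure.map Z ℙ).conv (Measure.map Z ℙ)) (Ioi x)).toReal

/-- The distribution of `Z` belongs to the class `S(γ)`: it belongs to `L(γ)`, the
exponential moment `c = ∫ e^{γ y} dV(y)` is finite, and the tail of the two-fold
convolution satisfies `V̄*²(x) ~ 2 c V̄(x)` as `x → ∞`. -/
def MemSGamma {Ω : Type*} [MeasureSpace Ω] (Z : Ω → ℝ) (γ : ℝ) : Prop :=
  MemLGamma Z γ ∧
    Integrable (fun y => Real.exp (γ * y)) (Measure.map Z ℙ) ∧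
    (fun x => convSqTail Z x) ~[atTop]
      (fun x => 2 * (∫ y, Real.exp (γ * y) ∂(Measure.map Z ℙ)) * rvTail Z x)

open Classical in
/-- `γ / β_G`, where `β_G = sup {y : G(y) < 1}` is the right endpoint of the distribution
of `Z`, with the convention that `γ / β_G = 0` when `β_G = ∞`.
(Note that `G(y) < 1 ↔ P(Z > y) > 0`.) -/
def gammaOverBeta {Ω : Type*} [MeasureSpace Ω] (Z : Ω → ℝ) (γ : ℝ) : ℝ :=
  if BddAbove {y : ℝ | 0 < rvTail Z y} then γ / sSup {y : ℝ | 0 < rvTail Z y} else 0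

/-- Assumption 2: `Ḡ(b x) = o(H̄(x))` as `x → ∞` for every constant `b > 0`, where `G` is
the distribution of `Y` and `H` is the distribution of the product `X Y`. -/
def Assumption2 {Ω : Type*} [MeasureSpace Ω] (X Y : Ω → ℝ) : Prop :=
  ∀ b > 0, (fun x => rvTail Y (b * x)) =o[atTop] fun x => rvTail (fun ω => X ω * Y ω) x

/-- Assumption 1: `K x y` is the conditional probability `P(X > x | Y = y)`, namely for
`y` in the support of `Y` it is the limit of `P(X > x | Y ∈ (y - δ, y + δ])` as `δ → 0+`,
and for `y` outside the support it is the unconditional probability `P(X > x)` (and then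
`h y = 1`); `h : [0,∞) → (0,∞)` is a measurable function such that
`P(X > x | Y = y) ~ h(y) P(X > x)` as `x → ∞`, uniformly for `y ≥ 0`. -/
def Assumption1 {Ω : Type*} [MeasureSpace Ω] (X Y : Ω → ℝ) (h : ℝ → ℝ) (K : ℝ → ℝ → ℝ) :
    Prop :=
  Measurable h ∧ (∀ y, 0 ≤ y → 0 < h y) ∧
    (∀ y, y ∉ distSupport Y → h y = 1 ∧ ∀ x, K x y = rvTail X x) ∧
    (∀ y ∈ distSupport Y, ∀ x : ℝ,
      Tendsto
        (fun δ : ℝ => (ℙ {ω | x < X ω ∧ Y ω ∈ Ioc (y - δ) (y + δ)}).toReal /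
          (ℙ {ω | Y ω ∈ Ioc (y - δ) (y + δ)}).toReal)
        (nhdsWithin 0 (Ioi 0)) (nhds (K x y))) ∧
    ∀ ε > 0, ∀ᶠ x in atTop, ∀ y, 0 ≤ y → |K x y / (h y * rvTail X x) - 1| < ε

/-- `(X, Y)` follows a Farlie–Gumbel–Morgenstern (FGM) distribution with parameter
`θ ∈ [-1, 1]`: `P(X > x, Y > y) = F̄(x) Ḡ(y) (1 + θ F(x) G(y))` for all `x` in the
support of `X` and `y` in the support of `Y`. -/
def FGM {Ω : Type*} [MeasureSpace Ω] (X Y : Ω → ℝ) (θ : ℝ) : Prop :=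
  θ ∈ Icc (-1 : ℝ) 1 ∧
    ∀ x ∈ distSupport X, ∀ y ∈ distSupport Y,
      (ℙ {ω | x < X ω ∧ y < Y ω}).toReal =
        rvTail X x * rvTail Y y * (1 + θ * rvCdf X x * rvCdf Y y)

/-- `(X, Y)` follows a bivariate Sarmanov distribution with kernels `φ₁, φ₂` and
parameter `θ`: the joint law has density `1 + θ φ₁(x) φ₂(y)` with respect to the product
of the marginal laws, where `φ₁, φ₂` are measurable, `E φ₁(X) = E φ₂(Y) = 0` and
`1 + θ φ₁(x) φ₂(y) ≥ 0`. -/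
def Sarmanov {Ω : Type*} [MeasureSpace Ω] (X Y : Ω → ℝ) (φ₁ φ₂ : ℝ → ℝ) (θ : ℝ) : Prop :=
  Measurable φ₁ ∧ Measurable φ₂ ∧
    Integrable (fun ω => φ₁ (X ω)) ℙ ∧ Integrable (fun ω => φ₂ (Y ω)) ℙ ∧
    (∫ ω, φ₁ (X ω)) = 0 ∧ (∫ ω, φ₂ (Y ω)) = 0 ∧
    (∀ x y : ℝ, 0 ≤ y → 0 ≤ 1 + θ * φ₁ x * φ₂ y) ∧
    Measure.map (fun ω => (X ω, Y ω)) ℙ =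
      ((Measure.map X ℙ).prod (Measure.map Y ℙ)).withDensity
        (fun p => ENNReal.ofReal (1 + θ * φ₁ p.1 * φ₂ p.2))

/-- The condition `ψ(y) = lim_{δ → 0+} (∫_{y-δ}^{y+δ} φ₂(v) G(dv)) / (G(y+δ) - G(y-δ))`
for all `y` in the support of `Y`. -/
def SarmanovPsi {Ω : Type*} [MeasureSpace Ω] (Y : Ω → ℝ) (φ₂ ψ : ℝ → ℝ) : Prop :=
  ∀ y ∈ distSupport Y,
    Tendsto
      (fun δ : ℝ => (∫ v in Ioc (y - δ) (y + δ), φ₂ v ∂(Measure.map Y ℙ)) /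
        (rvCdf Y (y + δ) - rvCdf Y (y - δ)))
      (nhdsWithin 0 (Ioi 0)) (nhds (ψ y))



/-! ### Auxiliary lemmas -/

private lemma aux_tail_antitone (μ : Measure ℝ) [IsFiniteMeasure μ] :
    Antitone (fun t => (μ (Ioi t)).toReal) := fun _ _ hab =>
  ENNReal.toReal_mono (measure_ne_top _ _) (measure_mono (Ioi_subset_Ioi hab))

private lemma aux_itail_measurable (μ : Measure ℝ) [IsFiniteMeasure μ] {φ : ℝ → ℝ}
    (hφ : Integrable φ μ) : Measurable (fun t => ∫ u in Ioi t, φ u ∂μ) := by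
  have hp : Integrable (fun u => max (φ u) 0) μ := hφ.pos_part
  have hn : Integrable (fun u => max (-φ u) 0) μ := hφ.neg.pos_part
  have h1 : Antitone fun t => ∫ u in Ioi t, max (φ u) 0 ∂μ := fun a b hab =>
    setIntegral_mono_set hp.integrableOn
      (Eventually.of_forall fun u => le_max_right _ _) ((Ioi_subset_Ioi hab).eventuallyLE)
  have h2 : Antitone fun t => ∫ u in Ioi t, max (-φ u) 0 ∂μ := fun a b hab =>
    setIntegral_mono_set hn.integrableOn
      (Eventually.of_forall fun u => le_max_right _ _) ((Ioi_subset_Ioi hab).eventuallyLE)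
  have e : (fun t => ∫ u in Ioi t, φ u ∂μ)
      = fun t => (∫ u in Ioi t, max (φ u) 0 ∂μ) - ∫ u in Ioi t, max (-φ u) 0 ∂μ := by
    funext t
    rw [← integral_sub hp.integrableOn hn.integrableOn]
    exact setIntegral_congr_fun measurableSet_Ioi fun u _ => (max_zero_sub_eq_self (φ u)).symm
  rw [e]
  exact (h1.measurable).sub h2.measurable

private lemma aux_abs_integral_le (μ : Measure ℝ) (f : ℝ → ℝ) :
    |∫ u, f u ∂μ| ≤ ∫ u, |f u| ∂μ := by
  simpa [Real.norm_eq_abs] using norm_integral_le_integral_norm (μ := μ) f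

private lemma aux_integrable_bdd {μ : Measure ℝ} [IsFiniteMeasure μ] {f : ℝ → ℝ}
    (hf : AEStronglyMeasurable f μ) {C : ℝ} (h : ∀ᵐ y ∂μ, |f y| ≤ C) : Integrable f μ :=
  ⟨hf, HasFiniteIntegral.of_bounded (h.mono fun y hy => by rwa [Real.norm_eq_abs])⟩

private lemma aux_atoms_countable (μ : Measure ℝ) [SFinite μ] :
    {t : ℝ | μ {t} ≠ 0}.Countable := by
  have h := MeasureTheory.Measure.countable_meas_level_set_pos (μ := μ) (g := id) measurable_id
  refine h.mono fun t ht => ?_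
  simp only [id_eq, mem_setOf_eq] at *
  have e : {a : ℝ | a = t} = {t} := by ext; simp
  rw [e]
  exact pos_iff_ne_zero.2 ht

private lemma aux_besicovitch (μ : Measure ℝ) [IsFiniteMeasure μ] {f : ℝ → ℝ}
    (hf : Integrable f μ) :
    ∀ᵐ y ∂μ, Tendsto (fun r => ⨍ v in Metric.closedBall y r, f v ∂μ)
      (nhdsWithin 0 (Ioi 0)) (nhds (f y)) := by
  filter_upwards [(Besicovitch.vitaliFamily μ).ae_tendsto_average hf.locallyIntegrable] with y hy
  exact hy.comp (Besicovitch.tendsto_filterAt μ y)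

set_option maxHeartbeats 1000000 in
theorem product_tail_asymp_of_sarmanov {Ω : Type*} [MeasureSpace Ω] [IsProbabilityMeasure (ℙ : Measure Ω)]
    (X Y : Ω → ℝ) (hXm : Measurable X) (hYm : Measurable Y)
    (hYnonneg : ∀ ω, 0 ≤ Y ω)
    (hFunb : UnboundedDist X)
    (hXnd : ℙ {ω | X ω = 0} ≠ 1) (hYnd : ℙ {ω | Y ω = 0} ≠ 1)
    (φ₁ φ₂ ψ : ℝ → ℝ) (θ c d₁ : ℝ)
    (hSar : Sarmanov X Y φ₁ φ₂ θ)
    (hc : 0 < c) (hd₁ : 0 < d₁) (hψm : Measurable ψ)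
    (hψ : SarmanovPsi Y φ₂ ψ)
    (hφ₁ : Filter.Tendsto φ₁ atTop (nhds d₁))
    (has : ℙ {ω | c ≤ 1 + θ * d₁ * ψ (Y ω)} = 1)
    (hA2 : Assumption2 X Y) :
    (fun x => rvTail (fun ω => X ω * Y ω) x) ~[atTop]
      (fun x => ∫ y in Ioi (0 : ℝ),
        (1 + θ * d₁ * ψ y) * rvTail X (x / y) ∂(Measure.map Y ℙ)) := by
  obtain ⟨hφ₁m, hφ₂m, hφ₁i, hφ₂i, hEφ₁, hEφ₂, hpos, hjoint⟩ := hSar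
  set F : Measure ℝ := Measure.map X ℙ with hFdef
  set G : Measure ℝ := Measure.map Y ℙ with hGdef
  haveI hPF : IsProbabilityMeasure F := Measure.isProbabilityMeasure_map hXm.aemeasurable
  haveI hPG : IsProbabilityMeasure G := Measure.isProbabilityMeasure_map hYm.aemeasurable
  set Ft : ℝ → ℝ := fun t => (F (Ioi t)).toReal with hFt_def
  set It : ℝ → ℝ := fun t => ∫ u in Ioi t, φ₁ u ∂F with hIt_def
  -- basic facts
  have hrvX : ∀ t, rvTail X t = Ft t := by
    intro t
    have e : Ft t = (Measure.map X ℙ (Ioi t)).toReal := rfl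
    rw [rvTail, e, Measure.map_apply hXm measurableSet_Ioi]
    rfl
  have hrvY : ∀ t, rvTail Y t = (G (Ioi t)).toReal := by
    intro t
    have e : (G (Ioi t)).toReal = (Measure.map Y ℙ (Ioi t)).toReal := rfl
    rw [rvTail, e, Measure.map_apply hYm measurableSet_Ioi]
    rfl
  have hrvH : ∀ x, 0 ≤ rvTail (fun ω => X ω * Y ω) x := fun x => ENNReal.toReal_nonneg
  have hFt0 : ∀ t, 0 ≤ Ft t := fun t => ENNReal.toReal_nonneg
  have hFt1 : ∀ t, Ft t ≤ 1 := by
    intro t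
    have : (F (Ioi t)).toReal ≤ (F univ).toReal :=
      ENNReal.toReal_mono (measure_ne_top _ _) (measure_mono (subset_univ _))
    simpa [measure_univ] using this
  have hφ₁F : Integrable φ₁ F :=
    (integrable_map_measure hφ₁m.aestronglyMeasurable hXm.aemeasurable).2 hφ₁i
  have hφ₂G : Integrable φ₂ G :=
    (integrable_map_measure hφ₂m.aestronglyMeasurable hYm.aemeasurable).2 hφ₂i
  have hGneg : G (Iio 0) = 0 := by
    rw [hGdef, Measure.map_apply hYm measurableSet_Iio]
    have : Y ⁻¹' Iio 0 = ∅ := by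
      ext ω; simp only [mem_preimage, mem_Iio, mem_empty_iff_false, iff_false, not_lt]
      exact hYnonneg ω
    rw [this, measure_empty]
  have haeG : ∀ᵐ y ∂G, 0 ≤ y := by
    rw [ae_iff]
    have : {y : ℝ | ¬ 0 ≤ y} = Iio 0 := by ext; simp [not_le]
    rw [this]; exact hGneg
  have hFtm : Measurable Ft := (aux_tail_antitone F).measurable
  have hItm : Measurable It := aux_itail_measurable F hφ₁F
  -- L1 : boundedness of θ * φ₂ on the nonnegative half-line
  obtain ⟨C₀, hC₀pos, hC₀⟩ : ∃ C₀ > 0, ∀ y, 0 ≤ y → |θ * φ₂ y| ≤ C₀ := by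
    have hAhalf : ∀ᶠ u in atTop, d₁ / 2 < φ₁ u :=
      hφ₁.eventually (eventually_gt_nhds (by linarith : d₁ / 2 < d₁))
    obtain ⟨u₁, hu₁⟩ := hAhalf.exists
    have hneg : ∃ u₀, φ₁ u₀ < 0 := by
      by_contra h
      push_neg at h
      have hzero : (fun ω => φ₁ (X ω)) =ᵐ[ℙ] 0 :=
        (integral_eq_zero_iff_of_nonneg (fun ω => h (X ω)) hφ₁i).1 hEφ₁
      obtain ⟨A₀, hA₀⟩ := eventually_atTop.1 hAhalf
      set B := max A₀ 1 with hBdef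
      have hposB : 0 < rvTail X B := hFunb B (lt_of_lt_of_le one_pos (le_max_right _ _))
      have hne : ℙ {ω | B < X ω} ≠ 0 := by
        intro h0
        rw [rvTail, h0] at hposB
        simp at hposB
      apply hne
      have hnull : ℙ {ω | ¬ φ₁ (X ω) = (0 : Ω → ℝ) ω} = 0 := ae_iff.1 hzero
      refine measure_mono_null ?_ hnull
      intro ω hω
      simp only [mem_setOf_eq, Pi.zero_apply] at *
      have : d₁ / 2 < φ₁ (X ω) := hA₀ (X ω) (le_trans (le_max_left _ _) (le_of_lt hω))
      intro hzero'
      rw [hzero'] at this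
      linarith
    obtain ⟨u₀, hu₀⟩ := hneg
    refine ⟨max (1 / (-φ₁ u₀)) (2 / d₁),
      lt_of_lt_of_le (by positivity) (le_max_right _ _), fun y hy => ?_⟩
    have h₀ := hpos u₀ y hy
    have h₁ := hpos u₁ y hy
    rw [abs_le]
    constructor
    · have key : -(2 / d₁) ≤ θ * φ₂ y := by
        rcases le_or_gt 0 (θ * φ₂ y) with hs | hs
        · have : (0:ℝ) < 2 / d₁ := by positivity
          linarith
        · have e : θ * φ₁ u₁ * φ₂ y = (θ * φ₂ y) * φ₁ u₁ := by ring
          rw [e] at h₁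
          have h2 : d₁ / 2 ≤ φ₁ u₁ := le_of_lt hu₁
          have h3 : (θ * φ₂ y) * φ₁ u₁ ≤ (θ * φ₂ y) * (d₁ / 2) := by
            apply mul_le_mul_of_nonpos_left h2 (le_of_lt hs)
          have h4 : -1 ≤ (θ * φ₂ y) * (d₁ / 2) := by linarith
          have h5 : -1 / (d₁ / 2) ≤ θ * φ₂ y := by
            rw [div_le_iff₀ (by positivity : (0:ℝ) < d₁ / 2)]
            linarith
          have e2 : -(2 / d₁) = -1 / (d₁ / 2) := by
            field_simp
          rw [e2]
          exact h5
      exact le_trans (neg_le_neg (le_max_right _ _)) key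
    · have ha : (0:ℝ) < -φ₁ u₀ := by linarith
      have e : θ * φ₁ u₀ * φ₂ y = -((θ * φ₂ y) * (-φ₁ u₀)) := by ring
      rw [e] at h₀
      have h2 : (θ * φ₂ y) * (-φ₁ u₀) ≤ 1 := by linarith
      have h3 : θ * φ₂ y ≤ 1 / (-φ₁ u₀) := by
        rw [← le_div_iff₀ ha] at h2
        exact h2
      exact le_trans h3 (le_max_left _ _)
  -- supports and differentiation
  have hsupp : ∀ᵐ y ∂G, y ∈ distSupport Y := by
    set 𝒩 : Set (Set ℝ) := {b ∈ TopologicalSpace.countableBasis ℝ | G b = 0} with h𝒩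
    have h𝒩count : 𝒩.Countable := (TopologicalSpace.countable_countableBasis ℝ).mono (sep_subset _ _)
    have hUnull : G (⋃₀ 𝒩) = 0 := by
      rw [sUnion_eq_biUnion]
      exact (measure_biUnion_null_iff h𝒩count).2 fun b hb => hb.2
    have hsubset : {y : ℝ | y ∉ distSupport Y} ⊆ ⋃₀ 𝒩 := by
      intro y hy
      simp only [mem_setOf_eq, distSupport, not_forall] at hy
      obtain ⟨δ, hδ, hnpos⟩ := hy
      have h0 : G (Ioo (y - δ) (y + δ)) = 0 := by
        have hmap : ℙ {ω | Y ω ∈ Ioo (y - δ) (y + δ)} = G (Ioo (y - δ) (y + δ)) := by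
          rw [hGdef, Measure.map_apply hYm measurableSet_Ioo]
          rfl
        rw [← hmap]
        exact le_antisymm (not_lt.1 hnpos) zero_le
      obtain ⟨b, hbB, hyb, hbsub⟩ :=
        (TopologicalSpace.isBasis_countableBasis ℝ).exists_subset_of_mem_open
          (show y ∈ Ioo (y - δ) (y + δ) by constructor <;> linarith) isOpen_Ioo
      exact ⟨b, ⟨hbB, le_antisymm (le_trans (measure_mono hbsub) (le_of_eq h0)) zero_le⟩, hyb⟩
    rw [ae_iff]
    exact measure_mono_null hsubset hUnull
  have hcdf : ∀ a b : ℝ, a ≤ b → rvCdf Y b - rvCdf Y a = (G (Ioc a b)).toReal := by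
    intro a b hab
    have hia : rvCdf Y a = (G (Iic a)).toReal := by
      have e : (G (Iic a)).toReal = (Measure.map Y ℙ (Iic a)).toReal := rfl
      rw [rvCdf, e, Measure.map_apply hYm measurableSet_Iic]
      rfl
    have hib : rvCdf Y b = (G (Iic b)).toReal := by
      have e : (G (Iic b)).toReal = (Measure.map Y ℙ (Iic b)).toReal := rfl
      rw [rvCdf, e, Measure.map_apply hYm measurableSet_Iic]
      rfl
    have hunion : G (Iic b) = G (Iic a) + G (Ioc a b) := by
      rw [← Iic_union_Ioc_eq_Iic hab]
      exact measure_union (Iic_disjoint_Ioc le_rfl) measurableSet_Ioc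
    rw [hia, hib, hunion, ENNReal.toReal_add (measure_ne_top _ _) (measure_ne_top _ _)]
    ring
  have hpsi : ∀ᵐ y ∂G, ψ y = φ₂ y := by
    have hatoms : {t : ℝ | G {t} ≠ 0}.Countable := aux_atoms_countable G
    filter_upwards [hsupp, aux_besicovitch G hφ₂G] with y hys hyb
    set bad : Set ℝ := (fun δ : ℝ => y - δ) ⁻¹' {t : ℝ | G {t} ≠ 0} with hbad
    have hinj : Function.Injective fun δ : ℝ => y - δ := by
      intro a b hab
      simp only at hab
      linarith
    have hbadcount : bad.Countable := hatoms.preimage hinj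
    set sgood : Set ℝ := Ioi 0 \ bad with hsgood
    have hsN : (nhdsWithin (0:ℝ) sgood).NeBot := by
      rw [← mem_closure_iff_nhdsWithin_neBot, Metric.mem_closure_iff]
      intro ε hε
      have hvol : volume (Ioo (0:ℝ) ε) ≠ 0 := by
        simp [Real.volume_Ioo, hε]
      have hnsub : ¬ (Ioo (0:ℝ) ε ⊆ bad) := fun hsub =>
        hvol (measure_mono_null hsub (hbadcount.measure_zero _))
      have hne : (Ioo (0:ℝ) ε \ bad).Nonempty := by
        rw [Set.nonempty_iff_ne_empty]
        intro h
        exact hnsub (diff_eq_empty.1 h)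
      obtain ⟨b, ⟨hb1, hb2⟩, hb3⟩ := hne
      refine ⟨b, ⟨hb1, hb3⟩, ?_⟩
      rw [Real.dist_eq, abs_of_nonpos (by linarith)]
      linarith
    have hfun_eq : ∀ δ ∈ sgood,
        (∫ v in Ioc (y - δ) (y + δ), φ₂ v ∂(Measure.map Y ℙ)) /
          (rvCdf Y (y + δ) - rvCdf Y (y - δ))
        = ⨍ v in Metric.closedBall y δ, φ₂ v ∂G := by
      intro δ hδ
      obtain ⟨hδpos, hδbad⟩ := hδ
      have hGa : G {y - δ} = 0 := not_not.1 hδbad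
      have hab : y - δ ≤ y + δ := by
        have : (0:ℝ) < δ := hδpos
        linarith
      have hIccIoc : G (Icc (y - δ) (y + δ)) = G (Ioc (y - δ) (y + δ)) := by
        refine le_antisymm ?_ (measure_mono Ioc_subset_Icc_self)
        calc G (Icc (y - δ) (y + δ)) ≤ G ({y - δ} ∪ Ioc (y - δ) (y + δ)) := by
              refine measure_mono fun z hz => ?_
              rcases eq_or_lt_of_le hz.1 with h | h
              · exact Or.inl (by simp [← h])
              · exact Or.inr ⟨h, hz.2⟩
          _ ≤ G {y - δ} + G (Ioc (y - δ) (y + δ)) := measure_union_le _ _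
          _ = G (Ioc (y - δ) (y + δ)) := by rw [hGa, zero_add]
      have hIntEq : ∫ v in Ioc (y - δ) (y + δ), φ₂ v ∂G
          = ∫ v in Icc (y - δ) (y + δ), φ₂ v ∂G := by
        refine setIntegral_congr_set ?_
        rw [MeasureTheory.ae_eq_set]
        constructor
        · rw [diff_eq_empty.2 Ioc_subset_Icc_self, measure_empty]
        · refine measure_mono_null (fun z hz => ?_) hGa
          rcases hz with ⟨hz1, hz2⟩
          simp only [mem_Ioc, not_and_or, not_lt, not_le] at hz2
          rcases hz2 with h | h
          · exact le_antisymm h hz1.1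
          · exact absurd hz1.2 (not_le.2 h)
      rw [Real.closedBall_eq_Icc, setAverage_eq, smul_eq_mul, ← hIntEq,
        hcdf _ _ hab, measureReal_def, hIccIoc]
      rw [div_eq_inv_mul]
    have h1 : Tendsto (fun δ : ℝ =>
        (∫ v in Ioc (y - δ) (y + δ), φ₂ v ∂(Measure.map Y ℙ)) /
          (rvCdf Y (y + δ) - rvCdf Y (y - δ))) (nhdsWithin 0 sgood) (nhds (ψ y)) :=
      (hψ y hys).mono_left (nhdsWithin_mono 0 diff_subset)
    have h2 : Tendsto (fun δ : ℝ => ⨍ v in Metric.closedBall y δ, φ₂ v ∂G)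
        (nhdsWithin 0 sgood) (nhds (φ₂ y)) :=
      hyb.mono_left (nhdsWithin_mono 0 diff_subset)
    have h3 : (fun δ : ℝ =>
        (∫ v in Ioc (y - δ) (y + δ), φ₂ v ∂(Measure.map Y ℙ)) /
          (rvCdf Y (y + δ) - rvCdf Y (y - δ)))
        =ᶠ[nhdsWithin 0 sgood] fun δ => ⨍ v in Metric.closedBall y δ, φ₂ v ∂G :=
      eventually_mem_nhdsWithin.mono fun δ hδ => hfun_eq δ hδ
    exact tendsto_nhds_unique (h1.congr' h3) h2
  -- a.s. lower bound transferred to φ₂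
  have hwc : ∀ᵐ y ∂G, c ≤ 1 + θ * d₁ * φ₂ y := by
    have hmeasS : MeasurableSet {y : ℝ | c ≤ 1 + θ * d₁ * ψ y} :=
      measurableSet_le measurable_const (measurable_const.add (hψm.const_mul (θ * d₁)))
    have h0 : ∀ᵐ ω ∂ℙ, c ≤ 1 + θ * d₁ * ψ (Y ω) := by
      rw [ae_iff]
      have hc' : {ω | ¬ c ≤ 1 + θ * d₁ * ψ (Y ω)} = {ω | c ≤ 1 + θ * d₁ * ψ (Y ω)}ᶜ := by
        ext; simp
      rw [hc']
      have hms : MeasurableSet {ω | c ≤ 1 + θ * d₁ * ψ (Y ω)} := hYm hmeasS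
      rw [prob_compl_eq_zero_iff hms]
      exact has
    have h1 : ∀ᵐ y ∂G, c ≤ 1 + θ * d₁ * ψ y :=
      (MeasureTheory.ae_map_iff hYm.aemeasurable hmeasS).2 h0
    filter_upwards [h1, hpsi] with y h1y h2y
    rwa [h2y] at h1y
  -- the Fubini-type identity for the tail of the product
  have hf_eq : ∀ x, 0 < x → rvTail (fun ω => X ω * Y ω) x
      = ∫ y in Ioi 0, (Ft (x / y) + (θ * φ₂ y) * It (x / y)) ∂G := by
    intro x hx
    set S : Set (ℝ × ℝ) := {p | x < p.1 * p.2} with hSdef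
    have hS : MeasurableSet S := measurableSet_lt measurable_const (measurable_fst.mul measurable_snd)
    set ρ : ℝ × ℝ → ℝ := fun p => 1 + θ * φ₁ p.1 * φ₂ p.2 with hρdef
    have hρm : Measurable ρ := by
      exact measurable_const.add
        (((hφ₁m.comp measurable_fst).const_mul θ).mul (hφ₂m.comp measurable_snd))
    have hρi : Integrable ρ (F.prod G) := by
      refine (integrable_const 1).add ?_
      have h := (hφ₁F.mul_prod hφ₂G).const_mul θ
      exact h.congr (Eventually.of_forall fun p => by simp [hρdef]; ring)
    have haePos : ∀ᵐ p ∂(F.prod G), 0 ≤ ρ p := by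
      have h2 : ∀ᵐ p ∂(F.prod G), 0 ≤ p.2 := by
        rw [ae_iff]
        have e : {p : ℝ × ℝ | ¬ 0 ≤ p.2} = univ ×ˢ Iio 0 := by
          ext p; simp [not_le]
        rw [e, Measure.prod_prod, hGneg, mul_zero]
      exact h2.mono fun p hp => hpos p.1 p.2 hp
    have h1 : rvTail (fun ω => X ω * Y ω) x
        = ((Measure.map (fun ω => (X ω, Y ω)) ℙ) S).toReal := by
      rw [rvTail, Measure.map_apply (hXm.prodMk hYm) hS]
      rfl
    rw [h1, hjoint, withDensity_apply _ hS]
    have h3 : ∫⁻ p in S, ENNReal.ofReal (1 + θ * φ₁ p.1 * φ₂ p.2) ∂(F.prod G)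
        = ENNReal.ofReal (∫ p in S, ρ p ∂(F.prod G)) :=
      (ofReal_integral_eq_lintegral_ofReal hρi.integrableOn (ae_restrict_of_ae haePos)).symm
    rw [h3, ENNReal.toReal_ofReal (integral_nonneg_of_ae (ae_restrict_of_ae haePos))]
    rw [← integral_indicator hS]
    rw [integral_prod_symm _ (hρi.indicator hS)]
    have h6 : ∀ᵐ v ∂G, (∫ u, S.indicator ρ (u, v) ∂F)
        = (Ioi (0:ℝ)).indicator (fun v => Ft (x / v) + (θ * φ₂ v) * It (x / v)) v := by
      filter_upwards [haeG] with v hv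
      rcases eq_or_lt_of_le hv with hv0 | hv0
      · have hz : ∀ u : ℝ, S.indicator ρ (u, v) = 0 := by
          intro u
          refine indicator_of_notMem ?_ _
          simp only [hSdef, mem_setOf_eq, not_lt, ← hv0, mul_zero]
          exact le_of_lt hx
        simp only [hz, integral_zero]
        rw [indicator_of_notMem (by simp [← hv0]) _]
      · rw [indicator_of_mem (mem_Ioi.2 hv0)]
        have hset : ∀ u : ℝ, S.indicator ρ (u, v)
            = (Ioi (x / v)).indicator (fun u => ρ (u, v)) u := by
          intro u
          by_cases h : x / v < u
          · rw [indicator_of_mem (show (u, v) ∈ S from (div_lt_iff₀ hv0).1 h),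
              indicator_of_mem (mem_Ioi.2 h)]
          · rw [indicator_of_notMem (show (u, v) ∉ S from ?_),
              indicator_of_notMem (by simpa using h)]
            simp only [hSdef, mem_setOf_eq, not_lt]
            rw [not_lt] at h
            calc u * v ≤ (x / v) * v := mul_le_mul_of_nonneg_right h (le_of_lt hv0)
              _ = x := div_mul_cancel₀ x (ne_of_gt hv0)
        rw [integral_congr_ae (Eventually.of_forall hset), integral_indicator measurableSet_Ioi]
        have hre : (fun u : ℝ => ρ (u, v)) = fun u => 1 + (θ * φ₂ v) * φ₁ u := by
          funext u; simp only [hρdef]; ring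
        rw [hre]
        rw [integral_add (integrableOn_const (C := (1:ℝ)) (measure_ne_top _ _))
          (hφ₁F.integrableOn.const_mul _)]
        rw [integral_const_mul, setIntegral_const, smul_eq_mul, mul_one, measureReal_def]
    rw [integral_congr_ae h6, integral_indicator measurableSet_Ioi]
  -- rewriting `g`
  have hg_eq : ∀ x : ℝ, (∫ y in Ioi (0 : ℝ),
        (1 + θ * d₁ * ψ y) * rvTail X (x / y) ∂(Measure.map Y ℙ))
      = ∫ y in Ioi 0, (1 + θ * d₁ * φ₂ y) * Ft (x / y) ∂G := by
    intro x
    refine setIntegral_congr_ae measurableSet_Ioi ?_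
    filter_upwards [hpsi] with y hy _
    rw [hy, hrvX]
  -- integrability of various integrands on (0, ∞) with respect to G
  have hmdiv : ∀ x : ℝ, Measurable fun y : ℝ => x / y :=
    fun x => measurable_const.div measurable_id
  have int1 : ∀ x : ℝ, IntegrableOn (fun y => Ft (x / y)) (Ioi 0) G := by
    intro x
    have hm : Measurable fun y : ℝ => Ft (x / y) := by exact hFtm.comp (hmdiv x)
    refine aux_integrable_bdd hm.aestronglyMeasurable (C := 1) ?_
    exact Eventually.of_forall fun y => by
      rw [abs_of_nonneg (hFt0 _)]; exact hFt1 _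
  set B₁ : ℝ := ∫ u, |φ₁ u| ∂F with hB₁def
  have hItbd : ∀ t, |It t| ≤ B₁ := by
    intro t
    calc |It t| ≤ ∫ u in Ioi t, |φ₁ u| ∂F := aux_abs_integral_le _ _
      _ ≤ B₁ := setIntegral_le_integral hφ₁F.abs (Eventually.of_forall fun u => abs_nonneg _)
  have int2 : ∀ x : ℝ, IntegrableOn (fun y => (θ * φ₂ y) * It (x / y)) (Ioi 0) G := by
    intro x
    have hm : Measurable fun y : ℝ => (θ * φ₂ y) * It (x / y) := by
      exact (hφ₂m.const_mul θ).mul (hItm.comp (hmdiv x))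
    refine aux_integrable_bdd hm.aestronglyMeasurable (C := C₀ * B₁) ?_
    rw [ae_restrict_iff' measurableSet_Ioi]
    refine Eventually.of_forall fun y hy => ?_
    rw [abs_mul]
    exact mul_le_mul (hC₀ y (le_of_lt hy)) (hItbd _) (abs_nonneg _) (le_of_lt hC₀pos)
  have int3 : ∀ x : ℝ, IntegrableOn (fun y => (1 + θ * d₁ * φ₂ y) * Ft (x / y)) (Ioi 0) G := by
    intro x
    have hm : Measurable fun y : ℝ => (1 + θ * d₁ * φ₂ y) * Ft (x / y) := by
      exact (measurable_const.add (hφ₂m.const_mul (θ * d₁))).mul (hFtm.comp (hmdiv x))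
    refine aux_integrable_bdd hm.aestronglyMeasurable (C := (1 + d₁ * C₀) * 1) ?_
    · rw [ae_restrict_iff' measurableSet_Ioi]
      refine Eventually.of_forall fun y hy => ?_
      rw [abs_mul, abs_of_nonneg (hFt0 _)]
      have h1 : |1 + θ * d₁ * φ₂ y| ≤ 1 + d₁ * C₀ := by
        have := hC₀ y (le_of_lt hy)
        have h2 : |θ * d₁ * φ₂ y| ≤ d₁ * C₀ := by
          have : θ * d₁ * φ₂ y = d₁ * (θ * φ₂ y) := by ring
          rw [this, abs_mul, abs_of_nonneg (le_of_lt hd₁)]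
          exact mul_le_mul_of_nonneg_left (hC₀ y (le_of_lt hy)) (le_of_lt hd₁)
        calc |1 + θ * d₁ * φ₂ y| ≤ |1| + |θ * d₁ * φ₂ y| := abs_add_le _ _
          _ ≤ 1 + d₁ * C₀ := by rw [abs_one]; linarith
      exact mul_le_mul h1 (hFt1 _) (hFt0 _) (by positivity)
  have int4 : ∀ x : ℝ, IntegrableOn
      (fun y => (θ * φ₂ y) * (It (x / y) - d₁ * Ft (x / y))) (Ioi 0) G := by
    intro x
    have hm : Measurable fun y : ℝ => (θ * φ₂ y) * (It (x / y) - d₁ * Ft (x / y)) := by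
      exact (hφ₂m.const_mul θ).mul ((hItm.comp (hmdiv x)).sub ((hFtm.comp (hmdiv x)).const_mul d₁))
    refine aux_integrable_bdd hm.aestronglyMeasurable (C := C₀ * (B₁ + d₁ * 1)) ?_
    rw [ae_restrict_iff' measurableSet_Ioi]
    refine Eventually.of_forall fun y hy => ?_
    rw [abs_mul]
    refine mul_le_mul (hC₀ y (le_of_lt hy)) ?_ (abs_nonneg _) (le_of_lt hC₀pos)
    calc |It (x / y) - d₁ * Ft (x / y)| ≤ |It (x / y)| + |d₁ * Ft (x / y)| := abs_sub _ _
      _ ≤ B₁ + d₁ * 1 := by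
          refine add_le_add (hItbd _) ?_
          rw [abs_mul, abs_of_nonneg (le_of_lt hd₁), abs_of_nonneg (hFt0 _)]
          exact mul_le_mul_of_nonneg_left (hFt1 _) (le_of_lt hd₁)
  -- the comparison integral T
  set T : ℝ → ℝ := fun x => ∫ y in Ioi 0, Ft (x / y) ∂G with hTdef
  have hT0 : ∀ x, 0 ≤ T x := fun x => integral_nonneg fun y => hFt0 _
  have hcT : ∀ x, c * T x ≤ ∫ y in Ioi 0, (1 + θ * d₁ * φ₂ y) * Ft (x / y) ∂G := by
    intro x
    rw [hTdef, ← integral_const_mul]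
    refine integral_mono_ae ((int1 x).const_mul c) (int3 x) ?_
    filter_upwards [ae_restrict_of_ae hwc] with y hy
    exact mul_le_mul_of_nonneg_right hy (hFt0 _)
  have hg0 : ∀ x, 0 ≤ ∫ y in Ioi 0, (1 + θ * d₁ * φ₂ y) * Ft (x / y) ∂G := by
    intro x
    exact le_trans (by positivity) (hcT x)
  -- the difference formula
  have hdiff : ∀ x, 0 < x → rvTail (fun ω => X ω * Y ω) x
        - (∫ y in Ioi 0, (1 + θ * d₁ * φ₂ y) * Ft (x / y) ∂G)
      = ∫ y in Ioi 0, (θ * φ₂ y) * (It (x / y) - d₁ * Ft (x / y)) ∂G := by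
    intro x hx
    rw [sub_eq_iff_eq_add, hf_eq x hx, ← integral_add (int4 x) (int3 x)]
    refine setIntegral_congr_fun measurableSet_Ioi fun y _ => ?_
    ring
  -- bounds on J t = It t - d₁ Ft t
  have hJ_eq : ∀ t, It t - d₁ * Ft t = ∫ u in Ioi t, (φ₁ u - d₁) ∂F := by
    intro t
    rw [integral_sub hφ₁F.integrableOn (integrableOn_const (measure_ne_top _ _))]
    rw [setIntegral_const, smul_eq_mul]
    rw [hIt_def, hFt_def, measureReal_def]
    ring
  set C₁ : ℝ := ∫ u, |φ₁ u - d₁| ∂F with hC₁def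
  have hC₁0 : 0 ≤ C₁ := integral_nonneg fun u => abs_nonneg _
  have hJC₁ : ∀ t, |It t - d₁ * Ft t| ≤ C₁ := by
    intro t
    rw [hJ_eq]
    calc |∫ u in Ioi t, (φ₁ u - d₁) ∂F| ≤ ∫ u in Ioi t, |φ₁ u - d₁| ∂F :=
          aux_abs_integral_le _ _
      _ ≤ C₁ := setIntegral_le_integral (hφ₁F.sub (integrable_const _)).abs
          (Eventually.of_forall fun u => abs_nonneg _)
  have hJsmall : ∀ ε, 0 < ε → ∃ A, 1 ≤ A ∧ ∀ t, A ≤ t → |It t - d₁ * Ft t| ≤ ε * Ft t := by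
    intro ε hε
    have hev : ∀ᶠ u in atTop, |φ₁ u - d₁| ≤ ε := by
      have := Metric.tendsto_nhds.1 hφ₁ ε hε
      exact this.mono fun u hu => le_of_lt (by rwa [Real.dist_eq] at hu)
    obtain ⟨A₀, hA₀⟩ := eventually_atTop.1 hev
    refine ⟨max A₀ 1, le_max_right _ _, fun t ht => ?_⟩
    rw [hJ_eq]
    have hbd : ∀ u ∈ Ioi t, ‖φ₁ u - d₁‖ ≤ ε := by
      intro u hu
      rw [Real.norm_eq_abs]
      exact hA₀ u (le_trans (le_trans (le_max_left _ _) ht) (le_of_lt hu))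
    calc |∫ u in Ioi t, (φ₁ u - d₁) ∂F| ≤ ε * (F (Ioi t)).toReal :=
          norm_setIntegral_le_of_norm_le_const (measure_lt_top _ _) hbd
      _ = ε * Ft t := rfl
  -- final assembly
  rw [Asymptotics.IsEquivalent, Asymptotics.isLittleO_iff]
  intro C hC
  set ε₀ : ℝ := min (C / 4) 2⁻¹ with hε₀def
  have hε₀pos : 0 < ε₀ := lt_min (by linarith) (by norm_num)
  have hε₀half : ε₀ ≤ 2⁻¹ := min_le_right _ _
  have h4ε₀ : 4 * ε₀ ≤ C := by
    have := min_le_left (C / 4) 2⁻¹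
    linarith [this]
  set ε₁ : ℝ := ε₀ * c / C₀ with hε₁def
  have hε₁pos : 0 < ε₁ := by positivity
  obtain ⟨A, hA1, hA⟩ := hJsmall ε₁ hε₁pos
  have hApos : (0:ℝ) < A := lt_of_lt_of_le one_pos hA1
  set C₂ : ℝ := C₀ * C₁ + 1 with hC₂def
  have hC₂pos : 0 < C₂ := by positivity
  have hlo := hA2 (1 / A) (by positivity)
  rw [Asymptotics.isLittleO_iff] at hlo
  have hev2 := hlo (show 0 < ε₀ / C₂ by positivity)
  filter_upwards [eventually_gt_atTop 0, hev2] with x hx hx2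
  simp only [Pi.sub_apply]
  set f : ℝ → ℝ := fun x => rvTail (fun ω => X ω * Y ω) x with hfdef
  set gg : ℝ := ∫ y in Ioi 0, (1 + θ * d₁ * φ₂ y) * Ft (x / y) ∂G with hggdef
  have hgval : (∫ y in Ioi (0:ℝ),
      (1 + θ * d₁ * ψ y) * rvTail X (x / y) ∂(Measure.map Y ℙ)) = gg := hg_eq x
  rw [hgval]
  have hxA : 0 < x / A := div_pos hx hApos
  -- split of the difference integral
  have hsplit : f x - gg
      = (∫ y in Ioc 0 (x / A), (θ * φ₂ y) * (It (x / y) - d₁ * Ft (x / y)) ∂G)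
        + ∫ y in Ioi (x / A), (θ * φ₂ y) * (It (x / y) - d₁ * Ft (x / y)) ∂G := by
    rw [hdiff x hx]
    rw [← Ioc_union_Ioi_eq_Ioi (le_of_lt hxA)]
    exact setIntegral_union (Ioc_disjoint_Ioi le_rfl) measurableSet_Ioi
      ((int4 x).mono_set Ioc_subset_Ioi_self) ((int4 x).mono_set (Ioi_subset_Ioi (le_of_lt hxA)))
  -- first piece
  have hE1 : |∫ y in Ioc 0 (x / A), (θ * φ₂ y) * (It (x / y) - d₁ * Ft (x / y)) ∂G|
      ≤ ε₀ * gg := by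
    have hsub1 : Ioc (0:ℝ) (x / A) ⊆ Ioi 0 := Ioc_subset_Ioi_self
    have hint : IntegrableOn (fun y => (θ * φ₂ y) * (It (x / y) - d₁ * Ft (x / y)))
        (Ioc 0 (x / A)) G := (int4 x).mono_set hsub1
    have hCε : C₀ * ε₁ = ε₀ * c := by
      rw [hε₁def]
      field_simp
    calc |∫ y in Ioc 0 (x / A), (θ * φ₂ y) * (It (x / y) - d₁ * Ft (x / y)) ∂G|
        ≤ ∫ y in Ioc 0 (x / A), |(θ * φ₂ y) * (It (x / y) - d₁ * Ft (x / y))| ∂G :=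
          aux_abs_integral_le _ _
      _ ≤ ∫ y in Ioc 0 (x / A), (C₀ * ε₁) * Ft (x / y) ∂G := by
          refine setIntegral_mono_on hint.abs
            (((int1 x).mono_set hsub1).const_mul (C₀ * ε₁)) measurableSet_Ioc ?_
          intro y hy
          have hy0 : 0 < y := hy.1
          have hxyA : A ≤ x / y := by
            rw [le_div_iff₀ hy0]
            have h1 : y * A ≤ x := (le_div_iff₀ hApos).1 hy.2
            linarith [h1]
          calc |(θ * φ₂ y) * (It (x / y) - d₁ * Ft (x / y))|
              = |θ * φ₂ y| * |It (x / y) - d₁ * Ft (x / y)| := abs_mul _ _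
            _ ≤ C₀ * (ε₁ * Ft (x / y)) :=
                mul_le_mul (hC₀ y hy0.le) (hA _ hxyA) (abs_nonneg _) hC₀pos.le
            _ = (C₀ * ε₁) * Ft (x / y) := by ring
      _ ≤ ∫ y in Ioi 0, (C₀ * ε₁) * Ft (x / y) ∂G := by
          refine setIntegral_mono_set ((int1 x).const_mul _) ?_ hsub1.eventuallyLE
          exact Eventually.of_forall fun y => by positivity
      _ = (C₀ * ε₁) * T x := integral_const_mul _ _
      _ = ε₀ * (c * T x) := by rw [hCε]; ring
      _ ≤ ε₀ * gg := mul_le_mul_of_nonneg_left (hcT x) hε₀pos.le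
  -- second piece
  have hE2 : |∫ y in Ioi (x / A), (θ * φ₂ y) * (It (x / y) - d₁ * Ft (x / y)) ∂G|
      ≤ ε₀ * f x := by
    have hfnn : 0 ≤ f x := hrvH x
    have hbd : ∀ y ∈ Ioi (x / A), ‖(θ * φ₂ y) * (It (x / y) - d₁ * Ft (x / y))‖ ≤ C₀ * C₁ := by
      intro y hy
      have hy0 : 0 < y := lt_trans hxA hy
      rw [Real.norm_eq_abs, abs_mul]
      exact mul_le_mul (hC₀ y hy0.le) (hJC₁ _) (abs_nonneg _) hC₀pos.le
    have hx2' : rvTail Y (x / A) ≤ (ε₀ / C₂) * f x := by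
      have he : 1 / A * x = x / A := one_div_mul_eq_div A x
      rw [he, Real.norm_eq_abs, Real.norm_eq_abs,
        abs_of_nonneg (show (0:ℝ) ≤ rvTail Y (x / A) from ENNReal.toReal_nonneg),
        abs_of_nonneg hfnn] at hx2
      exact hx2
    have hfrac : (C₀ * C₁) * (ε₀ / C₂) ≤ ε₀ := by
      have h1 : (C₀ * C₁) * (ε₀ / C₂) ≤ C₂ * (ε₀ / C₂) := by
        refine mul_le_mul_of_nonneg_right ?_ (by positivity)
        rw [hC₂def]; linarith
      have h2 : C₂ * (ε₀ / C₂) = ε₀ := by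
        field_simp
      linarith
    calc |∫ y in Ioi (x / A), (θ * φ₂ y) * (It (x / y) - d₁ * Ft (x / y)) ∂G|
        ≤ (C₀ * C₁) * (G (Ioi (x / A))).toReal := by
          rw [← Real.norm_eq_abs]
          exact norm_setIntegral_le_of_norm_le_const (measure_lt_top _ _) hbd
      _ = (C₀ * C₁) * rvTail Y (x / A) := by rw [hrvY]
      _ ≤ (C₀ * C₁) * ((ε₀ / C₂) * f x) :=
          mul_le_mul_of_nonneg_left hx2' (by positivity)
      _ = ((C₀ * C₁) * (ε₀ / C₂)) * f x := by ring
      _ ≤ ε₀ * f x := mul_le_mul_of_nonneg_right hfrac hfnn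
  have hfg : |f x - gg| ≤ ε₀ * gg + ε₀ * f x := by
    rw [hsplit]
    exact le_trans (abs_add_le _ _) (add_le_add hE1 hE2)
  have hggnn : 0 ≤ gg := hg0 x
  have hfnn : 0 ≤ f x := hrvH x
  have hf3 : f x ≤ 3 * gg := by
    have h1 : f x - gg ≤ |f x - gg| := le_abs_self _
    have h2 : (2:ℝ)⁻¹ ≤ 1 - ε₀ := by linarith
    nlinarith [hfg, hε₀pos]
  rw [Real.norm_eq_abs, Real.norm_eq_abs, abs_of_nonneg hggnn]
  calc |f x - gg| ≤ ε₀ * gg + ε₀ * f x := hfg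
    _ ≤ ε₀ * gg + ε₀ * (3 * gg) := by nlinarith
    _ = 4 * ε₀ * gg := by ring
    _ ≤ C * gg := mul_le_mul_of_nonneg_right h4ε₀ hggnn
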